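/- Let A and B be real symmetric n×n matrices and suppose σ₁ < σ < σ₂ are real numbers such that A + σ₁B and A + σ₂B are both positive semidefinite. Then N(A + σB) = N(A) ∩ N(B), i.e., (A + σB)x = 0 if and only if Ax = 0 and Bx = 0. -/

import Mathlib

open Matrix

/-- if `σ₁ < σ < σ₂` and `A + σ₁B ≽ 0`, `A + σ₂B ≽ 0`, then
`N(A + σB) = N(A) ∩ N(B)`. -/
theorem stmt_6 {n : ℕ} (A B : Matrix (Fin n) (Fin n) ℝ)
    (hA : A.IsSymm) (hB : B.IsSymm) (σ₁ σ σ₂ : ℝ)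
    (hlt₁ : σ₁ < σ) (hlt₂ : σ < σ₂)
    (h₁ : (A + σ₁ • B).PosSemidef) (h₂ : (A + σ₂ • B).PosSemidef) :
    ∀ x : Fin n → ℝ, (A + σ • B) *ᵥ x = 0 ↔ (A *ᵥ x = 0 ∧ B *ᵥ x = 0) := by
  intro x
  constructor
  · intro hx
    set qA := x ⬝ᵥ A *ᵥ x with hqA
    set qB := x ⬝ᵥ B *ᵥ x with hqB
    have hsx : star x = x := by
      funext i; simp
    have hq₁ : 0 ≤ qA + σ₁ * qB := by
      have := (posSemidef_iff_dotProduct_mulVec.mp h₁).2 x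
      rwa [hsx, add_mulVec, smul_mulVec, dotProduct_add, dotProduct_smul,
        smul_eq_mul] at this
    have hq₂ : 0 ≤ qA + σ₂ * qB := by
      have := (posSemidef_iff_dotProduct_mulVec.mp h₂).2 x
      rwa [hsx, add_mulVec, smul_mulVec, dotProduct_add, dotProduct_smul,
        smul_eq_mul] at this
    have hq : qA + σ * qB = 0 := by
      have : x ⬝ᵥ (A + σ • B) *ᵥ x = 0 := by rw [hx, dotProduct_zero]
      rwa [add_mulVec, smul_mulVec, dotProduct_add, dotProduct_smul,
        smul_eq_mul] at this
    have e₁ : qA + σ₁ * qB = 0 := by nlinarith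
    have e₂ : qA + σ₂ * qB = 0 := by nlinarith
    have m₁ : (A + σ₁ • B) *ᵥ x = 0 := by
      apply (h₁.dotProduct_mulVec_zero_iff x).mp
      rw [hsx, add_mulVec, smul_mulVec, dotProduct_add, dotProduct_smul,
        smul_eq_mul]
      exact e₁
    have m₂ : (A + σ₂ • B) *ᵥ x = 0 := by
      apply (h₂.dotProduct_mulVec_zero_iff x).mp
      rw [hsx, add_mulVec, smul_mulVec, dotProduct_add, dotProduct_smul,
        smul_eq_mul]
      exact e₂
    have hBx : B *ᵥ x = 0 := by
      have hsub : (σ₂ - σ₁) • (B *ᵥ x) = 0 := by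
        have := congrArg₂ (· - ·) m₂ m₁
        simp only [add_mulVec, smul_mulVec, sub_zero] at this ⊢
        rw [sub_smul]
        abel_nf
        abel_nf at this
        linear_combination (norm := module) this
      have : (σ₂ - σ₁) ≠ 0 := by linarith
      exact (smul_eq_zero.mp hsub).resolve_left this
    have hAx : A *ᵥ x = 0 := by
      have := m₁
      rw [add_mulVec, smul_mulVec, hBx, smul_zero, add_zero] at this
      exact this
    exact ⟨hAx, hBx⟩
  · rintro ⟨hAx, hBx⟩
    rw [add_mulVec, smul_mulVec, hAx, hBx, smul_zero, add_zero]
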